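/- (Power's factorization lemma, part 2.) Let h : A ⥤ B, u : A ⥤ C, v : B ⥤ D, g : C ⥤ D be functors with h bijective on objects and g fully faithful, and let α : h ⋙ v ≅ u ⋙ g be a natural isomorphism. Then there exists a unique pair consisting of a functor w : B ⥤ C and a natural transformation β : v ⟶ w ⋙ g such that h ⋙ w = u and the whiskering of β by h equals the underlying natural transformation of α. Moreover, this β is a natural isomorphism. -/

import Mathlib

open CategoryTheory

universe v₁ v₂ v₃ v₄ u₁ u₂ u₃ u₄

section aux
variable {A : Type u₁} {D : Type u₄} [Category.{v₁} A] [Category.{v₄} D]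

lemma heq_natTrans_iff {F G G' : A ⥤ D} (hG : G = G')
    (τ : F ⟶ G) (σ : F ⟶ G') : HEq τ σ ↔ τ = σ ≫ eqToHom hG.symm := by
  subst hG; simp [heq_eq_eq]
end aux

set_option maxRecDepth 10000 in
/-- Power's factorization lemma, part 2: given a square commuting up to a
natural isomorphism `α : h ⋙ v ≅ u ⋙ g`, where `h` is bijective on objects
and `g` is fully faithful, there is a unique pair `(w, β)` consisting of a
functor `w : B ⥤ C` and a natural transformation `β : v ⟶ w ⋙ g` such that
`h ⋙ w = u` and the whiskering of `β` by `h` equals `α.hom`; moreover any such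
`β` is a natural isomorphism. -/
theorem power_factorization_unique_lift
    {A : Type u₁} {B : Type u₂} {C : Type u₃} {D : Type u₄}
    [Category.{v₁} A] [Category.{v₂} B] [Category.{v₃} C] [Category.{v₄} D]
    (h : A ⥤ B) (u : A ⥤ C) (v : B ⥤ D) (g : C ⥤ D)
    (hbo : Function.Bijective h.obj) [g.Full] [g.Faithful]
    (α : h ⋙ v ≅ u ⋙ g) :
    (∃! p : Σ w : B ⥤ C, v ⟶ w ⋙ g,
        h ⋙ p.1 = u ∧ HEq (Functor.whiskerLeft h p.2) α.hom) ∧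
    ∀ p : Σ w : B ⥤ C, v ⟶ w ⋙ g,
      (h ⋙ p.1 = u ∧ HEq (Functor.whiskerLeft h p.2) α.hom) → IsIso p.2 := by
  classical
  let e : A ≃ B := Equiv.ofBijective h.obj hbo
  have he : ∀ b, h.obj (e.symm b) = b := fun b => e.apply_symm_apply b
  have he' : ∀ a, e.symm (h.obj a) = a := fun a => e.symm_apply_apply a
  let w : B ⥤ C :=
  { obj := fun b => u.obj (e.symm b)
    map := fun {b b'} f => g.preimage
      (α.inv.app (e.symm b) ≫ v.map (eqToHom (he b) ≫ f ≫ eqToHom (he b').symm) ≫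
        α.hom.app (e.symm b'))
    map_id := by
      intro b
      apply g.map_injective
      simp
    map_comp := by
      intro b b' b'' f f'
      apply g.map_injective
      simp }
  have hwmap : ∀ {b b'} (f : b ⟶ b'), g.map (w.map f) =
      α.inv.app (e.symm b) ≫ v.map (eqToHom (he b) ≫ f ≫ eqToHom (he b').symm) ≫
        α.hom.app (e.symm b') := by
    intro b b' f
    simp [w]
  let β : v ⟶ w ⋙ g :=
  { app := fun b => v.map (eqToHom (he b).symm) ≫ α.hom.app (e.symm b)
    naturality := by
      intro b b' f
      simp only [Functor.comp_map, hwmap]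
      rw [Category.assoc, Iso.hom_inv_id_app_assoc, ← Functor.map_comp_assoc,
        ← Functor.map_comp_assoc]
      simp }
  have hβapp : ∀ b, β.app b = v.map (eqToHom (he b).symm) ≫ α.hom.app (e.symm b) :=
    fun _ => rfl
  have hw : h ⋙ w = u := by
    refine CategoryTheory.Functor.ext (fun a => congrArg u.obj (he' a)) ?_
    intro a a' f
    apply g.map_injective
    rw [Functor.comp_map, hwmap]
    have h1 : eqToHom (he (h.obj a)) = h.map (eqToHom (he' a)) := by
      rw [eqToHom_map]
    have h2 : eqToHom (he (h.obj a')).symm = h.map (eqToHom (he' a').symm) := by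
      rw [eqToHom_map]
    rw [h1, h2]
    simp only [Functor.map_comp, ← Functor.comp_map h v, Category.assoc]
    rw [← NatTrans.naturality_assoc α.inv (eqToHom (he' a)),
      ← NatTrans.naturality_assoc α.inv f,
      NatTrans.naturality α.hom (eqToHom (he' a').symm)]
    simp [eqToHom_map]
  have hG : h ⋙ (w ⋙ g) = u ⋙ g := by rw [← Functor.assoc, hw]
  have hβ : HEq (Functor.whiskerLeft h β) α.hom := by
    rw [heq_natTrans_iff hG]
    ext a
    simp only [Functor.whiskerLeft_app, NatTrans.comp_app, eqToHom_app]
    show v.map (eqToHom (he (h.obj a)).symm) ≫ α.hom.app (e.symm (h.obj a)) = _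
    have h1 : eqToHom (he (h.obj a)).symm = h.map (eqToHom (he' a).symm) := by
      rw [eqToHom_map]
    rw [h1, ← Functor.comp_map h v, NatTrans.naturality α.hom (eqToHom (he' a).symm)]
    simp [eqToHom_map]
  have hβiso : ∀ b, IsIso (β.app b) := fun b =>
    show IsIso (v.map (eqToHom (he b).symm) ≫ α.hom.app (e.symm b)) from inferInstance
  have key : ∀ (w₀ : B ⥤ C) (β₀ : v ⟶ w₀ ⋙ g), h ⋙ w₀ = u →
      HEq (Functor.whiskerLeft h β₀) α.hom →
      ∃ hob : ∀ b, w₀.obj b = w.obj b,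
        ∀ b, β₀.app b = β.app b ≫ eqToHom (congrArg g.obj (hob b)).symm := by
    intro w₀ β₀ hw₀ hβ₀
    have hG₀ : h ⋙ (w₀ ⋙ g) = u ⋙ g := by rw [← Functor.assoc, hw₀]
    have hob : ∀ b, w₀.obj b = w.obj b := fun b =>
      (congrArg w₀.obj (he b).symm).trans (Functor.congr_obj hw₀ (e.symm b))
    refine ⟨hob, fun b => ?_⟩
    rw [heq_natTrans_iff hG₀] at hβ₀
    have happ : ∀ a, β₀.app (h.obj a) = α.hom.app a ≫ eqToHom (Functor.congr_obj hG₀.symm a) := by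
      intro a
      have := congrArg (fun τ => NatTrans.app τ a) hβ₀
      simpa [eqToHom_app] using this
    have n := β₀.naturality (eqToHom (he b))
    rw [happ (e.symm b)] at n
    have hb : β₀.app b = v.map (eqToHom (he b).symm) ≫
        (α.hom.app (e.symm b) ≫ eqToHom (Functor.congr_obj hG₀.symm (e.symm b))) ≫
        (w₀ ⋙ g).map (eqToHom (he b)) := by
      rw [← n, ← Functor.map_comp_assoc]
      simp
    rw [hb]
    show _ = (v.map (eqToHom (he b).symm) ≫ α.hom.app (e.symm b)) ≫ _
    simp [eqToHom_map]
  constructor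
  · refine ⟨⟨w, β⟩, ⟨hw, hβ⟩, ?_⟩
    rintro ⟨w₀, β₀⟩ ⟨hw₀, hβ₀⟩
    obtain ⟨hob, happ⟩ := key w₀ β₀ hw₀ hβ₀
    have hwweq : w₀ = w := by
      refine CategoryTheory.Functor.ext hob ?_
      intro b b' f
      apply g.map_injective
      have nat0 := β₀.naturality f
      rw [happ b, happ b'] at nat0
      rw [Functor.comp_map] at nat0
      have nat1 := β.naturality f
      rw [Functor.comp_map] at nat1
      have e1 : eqToHom (congrArg g.obj (hob b)).symm ≫ g.map (w₀.map f) =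
          g.map (w.map f) ≫ eqToHom (congrArg g.obj (hob b')).symm := by
        have := hβiso b
        rw [← cancel_epi (β.app b), ← Category.assoc, ← Category.assoc, ← nat0,
          ← nat1, Category.assoc, hβapp b', Category.assoc, Category.assoc]
      rw [← cancel_epi (eqToHom (congrArg g.obj (hob b)).symm), e1]
      simp [eqToHom_map]
    subst hwweq
    have hβeq : β₀ = β := by
      ext b
      rw [happ b]
      simp
    rw [hβeq]
  · rintro ⟨w₀, β₀⟩ ⟨hw₀, hβ₀⟩
    obtain ⟨hob, happ⟩ := key w₀ β₀ hw₀ hβ₀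
    have : ∀ b, IsIso (β₀.app b) := by
      intro b
      rw [happ b]
      have := hβiso b
      infer_instance
    exact NatIso.isIso_of_isIso_app β₀
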